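/- Suppose (Z_t) is a sequence of nonnegative reals converging to some limit L, R : ℝ^q → ℝ^q is continuous, Z_t = ‖θ_t − θ*‖², and (θ − θ*)ᵀ R(θ) = 0 iff θ = θ*, with (θ − θ*)ᵀ R(θ) ≥ c(δ) > 0 whenever δ ≤ ‖θ − θ*‖ ≤ 1/δ for each δ > 0. If lim inf_t (θ_t − θ*)ᵀ R(θ_t) = 0, then L = 0. -/

import Mathlib

open Filter

/-- Final step of the Robbins–Monro argument: if the squared distances converge and the
drift vanishes along a subsequence, the limit of the squared distances is zero. -/
theorem limit_zero_of_liminf_drift_zero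
    {q : ℕ} (R : EuclideanSpace ℝ (Fin q) → EuclideanSpace ℝ (Fin q))
    (hR : Continuous R)
    (θseq : ℕ → EuclideanSpace ℝ (Fin q)) (θstar : EuclideanSpace ℝ (Fin q)) (L : ℝ)
    (hZ : Tendsto (fun t => ‖θseq t - θstar‖ ^ 2) atTop (nhds L))
    (hdrift_eq : ∀ θ, (inner ℝ (θ - θstar) (R θ) : ℝ) = 0 ↔ θ = θstar)
    (c : ℝ → ℝ)
    (hc : ∀ δ : ℝ, 0 < δ → 0 < c δ ∧
      ∀ θ, δ ≤ ‖θ - θstar‖ → ‖θ - θstar‖ ≤ 1 / δ →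
        c δ ≤ (inner ℝ (θ - θstar) (R θ) : ℝ))
    (hliminf : liminf (fun t => (inner ℝ (θseq t - θstar) (R (θseq t)) : ℝ)) atTop = 0) :
    L = 0 := by
  by_contra hL0
  -- L ≥ 0 since Z_t ≥ 0
  have hLnn : 0 ≤ L := le_of_tendsto_of_tendsto' tendsto_const_nhds hZ
    (fun t => by positivity)
  have hLpos : 0 < L := lt_of_le_of_ne hLnn (Ne.symm hL0)
  set s := Real.sqrt L with hs
  have hspos : 0 < s := Real.sqrt_pos.mpr hLpos
  -- ‖θ_t - θ*‖ → s
  have hnorm : Tendsto (fun t => ‖θseq t - θstar‖) atTop (nhds s) := by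
    have := (Real.continuous_sqrt.tendsto L).comp hZ
    convert this using 2 with t
    simp [Real.sqrt_sq (norm_nonneg _)]
  set δ := min (s / 2) (1 / (2 * s)) with hδ
  have hδpos : 0 < δ := lt_min (by positivity) (by positivity)
  obtain ⟨hcpos, hcbd⟩ := hc δ hδpos
  -- eventually δ ≤ ‖θ_t - θ*‖ ≤ 1/δ
  have hlow : ∀ᶠ t in atTop, δ ≤ ‖θseq t - θstar‖ := by
    filter_upwards [hnorm.eventually (eventually_ge_nhds (show s / 2 < s by linarith))]
      with t ht
    exact le_trans (min_le_left _ _) ht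
  have hub : ∀ᶠ t in atTop, ‖θseq t - θstar‖ ≤ 2 * s :=
    hnorm.eventually (eventually_le_nhds (show s < 2 * s by linarith))
  have hhigh : ∀ᶠ t in atTop, ‖θseq t - θstar‖ ≤ 1 / δ := by
    have h2s : (2 * s) ≤ 1 / δ := by
      rw [le_div_iff₀ hδpos]
      calc 2 * s * δ ≤ 2 * s * (1 / (2 * s)) := by
            apply mul_le_mul_of_nonneg_left (min_le_right _ _) (by positivity)
        _ = 1 := by field_simp
    filter_upwards [hub] with t ht
    exact le_trans ht h2s
  have hev : ∀ᶠ t in atTop, c δ ≤ (inner ℝ (θseq t - θstar) (R (θseq t)) : ℝ) := by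
    filter_upwards [hlow, hhigh] with t h1 h2
    exact hcbd _ h1 h2
  -- the drift is eventually bounded above (θ_t lies in a compact ball)
  have hcont : Continuous fun θ : EuclideanSpace ℝ (Fin q) =>
      (inner ℝ (θ - θstar) (R θ) : ℝ) :=
    (continuous_id.sub continuous_const).inner hR
  obtain ⟨M, hM⟩ := (isCompact_closedBall θstar (2 * s)).exists_bound_of_continuousOn
    hcont.continuousOn
  have hcob : IsCoboundedUnder (· ≥ ·)
      atTop (fun t => (inner ℝ (θseq t - θstar) (R (θseq t)) : ℝ)) := by
    apply isCoboundedUnder_ge_of_eventually_le (x := M) atTop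
    filter_upwards [hub] with t ht
    have : θseq t ∈ Metric.closedBall θstar (2 * s) := by
      simpa [Metric.mem_closedBall, dist_eq_norm] using ht
    have := hM _ this
    exact le_trans (le_abs_self _) (by simpa [Real.norm_eq_abs] using this)
  have := le_liminf_of_le hcob hev
  rw [hliminf] at this
  linarith
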